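/- arXiv:math/0505039 — 2 statements merged into one kernel-verified Lean document; each statement's English description precedes it below -/
import Mathlib

section
/- Let π be a p-perturbation (p > 0) of a locally regular supercritical CA 𝒯, and suppose w_π is a function assigning to each unit vector u a number w_π(u) > 0 such that for every unit vector u and every ε > 0, starting the random dynamics from A₀ = H_u⁻ ∩ ℤ², the probability that (H_u⁻ + t(w_π(u) − ε)·u) ∩ ℤ² ∩ B(0, t²) ⊆ A_t and A_t ∩ B(0, t²) ⊆ H_u⁻ + t(w_π(u) + ε)·u tends to 1 as t → ∞. Then the function u ↦ w_π(u) is continuous on the unit circle. -/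
open MeasureTheory ProbabilityTheory Filter Topology Set
open scoped Pointwise ENNReal

noncomputable section

abbrev Pt : Type := EuclideanSpace ℝ (Fin 2)

def mkPt (a b : ℝ) : Pt := (WithLp.equiv 2 (Fin 2 → ℝ)).symm ![a, b]

def toPt (z : ℤ × ℤ) : Pt := mkPt z.1 z.2

def lattice : Set Pt := Set.range toPt

structure CA where
  N : Set Pt
  finite : N.Finite
  subLat : N ⊆ lattice
  zeroMem : (0 : Pt) ∈ N
  negN : -N = N
  rule : Set Pt → Prop
  mono : ∀ ⦃S₁ S₂ : Set Pt⦄, S₁ ⊆ S₂ → rule S₁ → rule S₂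
  notEmpty : ¬ rule ∅
  ruleSymm : ∀ S : Set Pt, rule (-S) ↔ rule S
  solid : ∀ S : Set Pt, (0 : Pt) ∈ S → rule S

def CA.T (c : CA) (A : Set Pt) : Set Pt :=
  {x | x ∈ lattice ∧ c.rule (((fun a => a - x) '' A) ∩ c.N)}

def CA.Tbar (c : CA) (B : Set Pt) : Set Pt :=
  {x | c.rule ((((fun a => a - x) '' B) ∩ lattice) ∩ c.N)}

def Hminus (u : Pt) : Set Pt := {x | (inner ℝ x u : ℝ) ≤ 0}

def shiftSet (v : Pt) (S : Set Pt) : Set Pt := (fun x => x + v) '' S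

def IsSpeed (c : CA) (w : Pt → ℝ) : Prop :=
  ∀ u : Pt, ‖u‖ = 1 → c.Tbar (Hminus u) = shiftSet (w u • u) (Hminus u)

def Supercritical (w : Pt → ℝ) : Prop := ∀ u : Pt, ‖u‖ = 1 → 0 < w u

def FillsSpace (c : CA) (A : Set Pt) : Prop :=
  A ⊆ lattice ∧ ∀ x ∈ lattice, ∃ t : ℕ, x ∈ c.T^[t] A

def LocallyRegular (c : CA) : Prop :=
  ∀ A₀ : Set Pt, A₀.Finite → A₀ ⊆ lattice → ∃ C : ℝ, 0 < C ∧
    ∀ A : ℕ → Set Pt, A 0 = A₀ →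
      (∀ s, A s ⊆ A (s + 1)) → (∀ s, A (s + 1) ⊆ A s ∪ c.T (A s)) →
      ∀ t : ℕ, ∀ x ∈ A t, (∀ y ∈ A₀, C ≤ dist x y) →
        ∃ G : Set Pt, G.Finite ∧ G ⊆ A t ∧ G ⊆ Metric.closedBall x C ∧ FillsSpace c G

structure Perturbation (c : CA) where
  pr : Set Pt → ℝ
  nonneg : ∀ S, 0 ≤ pr S
  le_one : ∀ S, pr S ≤ 1
  mono : ∀ ⦃S₁ S₂ : Set Pt⦄, S₁ ⊆ S₂ → pr S₁ ≤ pr S₂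
  empty : pr ∅ = 0
  prSymm : ∀ S, pr (-S) = pr S
  solid : ∀ S : Set Pt, (0 : Pt) ∈ S → pr S = 1
  p : ℝ
  p_pos : 0 < p
  p_min : ∀ S : Set Pt, S ⊆ c.N → 0 < pr S → p ≤ pr S
  p_attained : ∃ S : Set Pt, S ⊆ c.N ∧ pr S = p
  compat : ∀ S : Set Pt, S ⊆ c.N → (c.rule S ↔ 0 < pr S)

def IsUniformIID {Ω : Type*} [MeasureSpace Ω] (U : ((ℤ × ℤ) × ℕ) → Ω → ℝ) : Prop :=
  (∀ i, Measurable (U i)) ∧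
  iIndepFun U ℙ ∧
  ∀ i, Measure.map (U i) ℙ = volume.restrict (Set.Icc (0 : ℝ) 1)

def IsDyn {Ω : Type*} (c : CA) (P : Perturbation c) (U : ((ℤ × ℤ) × ℕ) → Ω → ℝ)
    (A : ℕ → Ω → Set Pt) : Prop :=
  ∀ ω t, A (t + 1) ω =
    {x | ∃ z : ℤ × ℤ, toPt z = x ∧
      U (z, t) ω ≤ P.pr (((fun a => a - x) '' A t ω) ∩ c.N)}

def IsStdDyn {Ω : Type*} (c : CA) (p : ℝ) (U : ((ℤ × ℤ) × ℕ) → Ω → ℝ)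
    (A : ℕ → Ω → Set Pt) : Prop :=
  ∀ ω t, A (t + 1) ω =
    A t ω ∪ {x | x ∈ c.T (A t ω) ∧ ∃ z : ℤ × ℤ, toPt z = x ∧ U (z, t) ω ≤ p}

def SpeedEvent (u : Pt) (wu ε : ℝ) (t : ℕ) (At : Set Pt) : Prop :=
  shiftSet (((t : ℝ) * (wu - ε)) • u) (Hminus u) ∩ lattice ∩
      Metric.closedBall 0 ((t : ℝ) ^ 2) ⊆ At ∧
  At ∩ Metric.closedBall 0 ((t : ℝ) ^ 2) ⊆
      shiftSet (((t : ℝ) * (wu + ε)) • u) (Hminus u)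

def Lset (w : Pt → ℝ) : Set Pt := {x | ∀ u : Pt, ‖u‖ = 1 → (inner ℝ x u : ℝ) ≤ w u}

def Kset (w : Pt → ℝ) : Set Pt :=
  {x | ∃ u : Pt, ‖u‖ = 1 ∧ ∃ r : ℝ, 0 ≤ r ∧ r ≤ (w u)⁻¹ ∧ x = r • u}

def dKp (w : Pt → ℝ) : Set Pt :=
  frontier (Kset w) ∩ frontier (convexHull ℝ (Kset w))

def lineu (w : Pt → ℝ) (u : Pt) : Set Pt := {x | (inner ℝ x u : ℝ) = -(w u)}

def rot (β : ℝ) (v : Pt) : Pt :=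
  mkPt (Real.cos β * v 0 - Real.sin β * v 1) (Real.sin β * v 0 + Real.cos β * v 1)

def lineSet (q n : Pt) : Set Pt := {x | (inner ℝ (x - q) n : ℝ) = 0}

def farOpen (Nset : Set Pt) (q n : Pt) : Set Pt :=
  {x ∈ Nset | 0 < (inner ℝ (x - q) n : ℝ) * (inner ℝ q n : ℝ)}

def farClosed (Nset : Set Pt) (q n : Pt) : Set Pt :=
  {x ∈ Nset | 0 ≤ (inner ℝ (x - q) n : ℝ) * (inner ℝ q n : ℝ)}

def HasLDSpeed (c : CA) (P : Perturbation c) (wpi : Pt → ℝ) : Prop :=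
  ∀ u : Pt, ‖u‖ = 1 → 0 < wpi u ∧
    ∀ (Ω : Type) [MeasureSpace Ω] [IsProbabilityMeasure (ℙ : Measure Ω)]
      (U : ((ℤ × ℤ) × ℕ) → Ω → ℝ), IsUniformIID U →
      ∀ A : ℕ → Ω → Set Pt, IsDyn c P U A → A 0 = (fun _ => Hminus u ∩ lattice) →
      ∀ ε : ℝ, 0 < ε → ∃ cε : ℝ, 0 < cε ∧ ∀ t : ℕ, 1 ≤ t →
        ENNReal.ofReal (1 - Real.exp (-cε * t)) ≤ ℙ {ω | SpeedEvent u (wpi u) ε t (A t ω)}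

def ext (M : ℤ) (κ : ℝ) (A : Set (ℤ × ℤ)) : Set (ℤ × ℤ) :=
  {q | (0 ≤ q.1 ∧ q.1 ≤ M - 1 ∧ q ∈ A) ∨
       (M ≤ q.1 ∧ q.1 ≤ 2 * M - 1 ∧ (q.1 - M, ⌊(q.2 : ℝ) - κ * M⌋) ∈ A) ∨
       (-M ≤ q.1 ∧ q.1 < 0 ∧ (q.1 + M, ⌊(q.2 : ℝ) + κ * M⌋) ∈ A)}

def IsStripDyn {Ω : Type*} (c : CA) (P : Perturbation c) (M : ℤ) (κ : ℝ)
    (U : ((ℤ × ℤ) × ℕ) → Ω → ℝ) (A : ℕ → Ω → Set (ℤ × ℤ)) : Prop :=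
  ∀ ω t, A (t + 1) ω =
    {q | 0 ≤ q.1 ∧ q.1 ≤ M - 1 ∧
      U (q, t) ω ≤ P.pr ((toPt '' ((fun r => r - q) '' ext M κ (A t ω))) ∩ c.N)}

def hgt1 (A : Set (ℤ × ℤ)) (M : ℤ) (κ : ℝ) : ℝ :=
  sSup {r : ℝ | ∃ q ∈ A, 0 ≤ q.1 ∧ q.1 ≤ M - 1 ∧ r = κ * q.1 + q.2}

def hgt0 (A : Set (ℤ × ℤ)) (M : ℤ) (κ : ℝ) : ℝ :=
  sInf {r : ℝ | ∃ q : ℤ × ℤ, q ∉ A ∧ 0 ≤ q.1 ∧ q.1 ≤ M - 1 ∧ r = κ * q.1 + q.2}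

def boxN (ρ : ℕ) : Finset (ℤ × ℤ) := Finset.Icc (-(ρ : ℤ), -(ρ : ℤ)) ((ρ : ℤ), (ρ : ℤ))

def cutCard (ρ : ℕ) (a b cc : ℝ) : ℕ :=
  ((boxN ρ).filter (fun y => cc ≤ a * y.1 + b * y.2)).card

def lamSet (ρ : ℕ) (x : ℤ × ℤ) : Set ℕ :=
  {n | ∃ a b cc : ℝ, ¬(a = 0 ∧ b = 0) ∧ 0 < cc ∧ a * x.1 + b * x.2 = cc ∧ n = cutCard ρ a b cc}

def lamStar (ρ : ℕ) (x : ℤ × ℤ) : ℕ := sInf (lamSet ρ x)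

open scoped Classical in
def IsSlowSurface {Ω : Type*} (b : ℤ × ℕ → Ω → Bool) (η : ℕ → Ω → ℤ → ℕ) : Prop :=
  (∀ ω x, η 0 ω x = 0) ∧
  ∀ ω t x, η (t + 1) ω x =
    if b (x, t) ω = true ∧ ∀ y : ℤ, |y - x| ≤ 1 → η t ω x ≤ η t ω y
    then η t ω x + 1 else η t ω x

open scoped Classical in
def IsFastSurface {Ω : Type*} (b : ℤ × ℕ → Ω → Bool) (η : ℕ → Ω → ℤ → ℕ) : Prop :=
  (∀ ω x, η 0 ω x = 0) ∧
  ∀ ω t x, η (t + 1) ω x =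
    if b (x, t) ω = true ∨ ∃ y : ℤ, |y - x| ≤ 1 ∧ η t ω x < η t ω y
    then η t ω x + 1 else η t ω x

def AdmissibleField {Ω : Type*} [MeasureSpace Ω] (p' : ℝ) (r : ℕ)
    (b : ℤ × ℕ → Ω → Bool) : Prop :=
  (∀ i, Measurable (b i)) ∧
  (∀ i, ℙ {ω | b i ω = true} = ENNReal.ofReal p') ∧
  ∀ I : Finset (ℤ × ℕ),
    (∀ i ∈ I, ∀ j ∈ I, i ≠ j → i.2 ≠ j.2 ∨ (r : ℤ) < |i.1 - j.1|) →
    iIndepFun (fun i : I => b i.1) ℙ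


-- ===== auxiliary development =====
section Aux

lemma Pt.inner_eq (x y : Pt) : (inner ℝ x y : ℝ) = x 0 * y 0 + x 1 * y 1 := by
  simp [PiLp.inner_apply, Fin.sum_univ_two, RCLike.inner_apply, conj_trivial, mul_comm]

@[simp] lemma mkPt_apply0 (a b : ℝ) : mkPt a b 0 = a := rfl
@[simp] lemma mkPt_apply1 (a b : ℝ) : mkPt a b 1 = b := rfl

lemma toPt_apply0 (z : ℤ × ℤ) : toPt z 0 = (z.1 : ℝ) := rfl
lemma toPt_apply1 (z : ℤ × ℤ) : toPt z 1 = (z.2 : ℝ) := rfl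

lemma toPt_add (z w : ℤ × ℤ) : toPt (z + w) = toPt z + toPt w := by
  ext i
  fin_cases i <;>
    simp [toPt, mkPt, Prod.fst_add, Prod.snd_add] <;> push_cast <;> ring

lemma toPt_sub (z w : ℤ × ℤ) : toPt (z - w) = toPt z - toPt w := by
  ext i
  fin_cases i <;>
    simp [toPt, mkPt, Prod.fst_sub, Prod.snd_sub] <;> push_cast <;> ring

lemma toPt_injective : Function.Injective toPt := by
  intro z w h
  have h0 := congrArg (fun v : Pt => v 0) h
  have h1 := congrArg (fun v : Pt => v 1) h
  simp only [toPt_apply0, toPt_apply1, Int.cast_injective.eq_iff] at h0 h1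
  exact Prod.ext (by exact_mod_cast h0) (by exact_mod_cast h1)

lemma mem_lattice_iff {x : Pt} : x ∈ lattice ↔ ∃ z : ℤ × ℤ, toPt z = x := Iff.rfl

lemma lattice_add_mem {x y : Pt} (hx : x ∈ lattice) (hy : y ∈ lattice) : x + y ∈ lattice := by
  obtain ⟨z, rfl⟩ := hx; obtain ⟨w, rfl⟩ := hy
  exact ⟨z + w, toPt_add z w⟩

lemma lattice_sub_mem {x y : Pt} (hx : x ∈ lattice) (hy : y ∈ lattice) : x - y ∈ lattice := by
  obtain ⟨z, rfl⟩ := hx; obtain ⟨w, rfl⟩ := hy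
  exact ⟨z - w, toPt_sub z w⟩

lemma norm_le_abs_add (x : Pt) : ‖x‖ ≤ |x 0| + |x 1| := by
  have h : ‖x‖ = Real.sqrt (‖x 0‖ ^ 2 + ‖x 1‖ ^ 2) := by
    rw [EuclideanSpace.norm_eq, Fin.sum_univ_two]
  rw [h]
  have h2 : ‖x 0‖ ^ 2 + ‖x 1‖ ^ 2 ≤ (|x 0| + |x 1|) ^ 2 := by
    rw [Real.norm_eq_abs, Real.norm_eq_abs]
    nlinarith [abs_nonneg (x 0), abs_nonneg (x 1)]
  calc Real.sqrt (‖x 0‖ ^ 2 + ‖x 1‖ ^ 2) ≤ Real.sqrt ((|x 0| + |x 1|) ^ 2) :=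
        Real.sqrt_le_sqrt h2
    _ = |x 0| + |x 1| := by
        rw [Real.sqrt_sq (by positivity)]

/-- membership in a shifted halfplane -/
lemma mem_shift_Hminus {u : Pt} (hu : ‖u‖ = 1) (r : ℝ) (y : Pt) :
    y ∈ shiftSet (r • u) (Hminus u) ↔ (inner ℝ y u : ℝ) ≤ r := by
  constructor
  · rintro ⟨x, hx, rfl⟩
    have : (inner ℝ (x + r • u) u : ℝ) = (inner ℝ x u : ℝ) + r * ((inner ℝ u u : ℝ)) := by
      rw [inner_add_left, real_inner_smul_left]
    rw [this, real_inner_self_eq_norm_sq, hu] at *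
    simp only [one_pow, mul_one]
    have hx' : (inner ℝ x u : ℝ) ≤ 0 := hx
    linarith
  · intro h
    refine ⟨y - r • u, ?_, by module⟩
    show (inner ℝ (y - r • u) u : ℝ) ≤ 0
    rw [inner_sub_left, real_inner_smul_left, real_inner_self_eq_norm_sq, hu]
    simpa using h

end Aux

section DynSec

variable {Ω : Type*}

def dyn (c : CA) (P : Perturbation c) (U : ((ℤ × ℤ) × ℕ) → Ω → ℝ) (A0 : Set Pt) :
    ℕ → Ω → Set Pt
  | 0 => fun _ => A0
  | (t+1) => fun ω => {x | ∃ z : ℤ × ℤ, toPt z = x ∧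
      U (z, t) ω ≤ P.pr (((fun a => a - x) '' dyn c P U A0 t ω) ∩ c.N)}

lemma isDyn_dyn (c : CA) (P : Perturbation c) (U : ((ℤ × ℤ) × ℕ) → Ω → ℝ) (A0 : Set Pt) :
    IsDyn c P U (dyn c P U A0) := fun _ _ => rfl

lemma image_sub_inter_N (c : CA) (A : Set Pt) (x : Pt) :
    ((fun a => a - x) '' A) ∩ c.N = {n | n ∈ c.N ∧ x + n ∈ A} := by
  ext n
  simp only [Set.mem_inter_iff, Set.mem_image, Set.mem_setOf_eq]
  constructor
  · rintro ⟨⟨a, ha, rfl⟩, hN⟩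
    exact ⟨hN, by simpa using ha⟩
  · rintro ⟨hN, hA⟩
    exact ⟨⟨x + n, hA, by abel⟩, hN⟩

lemma dyn_coupling (c : CA) (P : Perturbation c) (U : ((ℤ × ℤ) × ℕ) → Ω → ℝ)
    (R : ℝ) (hN : ∀ n ∈ c.N, ‖n‖ ≤ R) :
    ∀ (t : ℕ) (x : Pt) (A0 B0 : Set Pt) (ω : Ω),
      (∀ y ∈ A0, dist y x ≤ R * t → y ∈ B0) →
      x ∈ dyn c P U A0 t ω → x ∈ dyn c P U B0 t ω := by
  intro t
  induction t with
  | zero =>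
    intro x A0 B0 ω h hx
    exact h x hx (by simp)
  | succ t ih =>
    rintro x A0 B0 ω h ⟨z, rfl, hz⟩
    refine ⟨z, rfl, le_trans hz (P.mono ?_)⟩
    rw [image_sub_inter_N, image_sub_inter_N]
    rintro n ⟨hnN, hmem⟩
    refine ⟨hnN, ih (toPt z + n) A0 B0 ω ?_ hmem⟩
    intro y hy hdist
    apply h y hy
    have h1 : dist y (toPt z) ≤ dist y (toPt z + n) + dist (toPt z + n) (toPt z) :=
      dist_triangle _ _ _
    have h2 : dist (toPt z + n) (toPt z) = ‖n‖ := by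
      rw [dist_eq_norm]; congr 1; abel
    have h3 : ‖n‖ ≤ R := hN n hnN
    have hR : (0:ℝ) ≤ R := le_trans (norm_nonneg _) h3
    push_cast
    nlinarith [hdist]

lemma dyn_subset_lattice (c : CA) (P : Perturbation c) (U : ((ℤ × ℤ) × ℕ) → Ω → ℝ)
    {A0 : Set Pt} (h : A0 ⊆ lattice) : ∀ t ω, dyn c P U A0 t ω ⊆ lattice := by
  intro t
  cases t with
  | zero => intro ω; exact h
  | succ t => rintro ω x ⟨z, rfl, _⟩; exact ⟨z, rfl⟩

lemma mem_image_add {v x : Pt} {S : Set Pt} : x ∈ (fun a => a + v) '' S ↔ x - v ∈ S := by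
  constructor
  · rintro ⟨a, ha, rfl⟩; simpa using ha
  · intro hx; exact ⟨x - v, hx, by module⟩

lemma dyn_translate (c : CA) (P : Perturbation c) (U : ((ℤ × ℤ) × ℕ) → Ω → ℝ)
    (zv : ℤ × ℤ) (A0 : Set Pt) :
    ∀ t ω, dyn c P U ((fun a => a + toPt zv) '' A0) t ω
      = (fun a => a + toPt zv) '' (dyn c P (fun i ω => U ((i.1 + zv, i.2)) ω) A0 t ω) := by
  intro t
  induction t with
  | zero => intro ω; rfl
  | succ t ih =>
    intro ω
    have key : ∀ z : ℤ × ℤ,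
        ((fun a => a - toPt (z + zv)) '' (dyn c P U ((fun a => a + toPt zv) '' A0) t ω)) ∩ c.N
        = ((fun a => a - toPt z) '' (dyn c P (fun i ω => U ((i.1 + zv, i.2)) ω) A0 t ω)) ∩ c.N := by
      intro z
      rw [image_sub_inter_N, image_sub_inter_N, ih ω]
      ext n
      simp only [Set.mem_setOf_eq, mem_image_add, toPt_add]
      rw [show toPt z + toPt zv + n - toPt zv = toPt z + n from by module]
    ext x
    simp only [dyn, Set.mem_setOf_eq, mem_image_add]
    constructor
    · rintro ⟨z, rfl, hz⟩
      refine ⟨z - zv, toPt_sub z zv, ?_⟩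
      have h2 := key (z - zv)
      rw [show z - zv + zv = z from by abel, toPt_sub] at h2
      rw [show z - zv + zv = z from by abel, ← h2]
      exact hz
    · rintro ⟨z, hz1, hz2⟩
      have hx : x = toPt (z + zv) := by
        rw [toPt_add]; exact eq_add_of_sub_eq hz1.symm
      subst hx
      refine ⟨z + zv, rfl, ?_⟩
      rw [key z]
      rw [toPt_add, show toPt z + toPt zv - toPt zv = toPt z from by abel] at hz2
      exact hz2

lemma dyn_comp {Ω' : Type*} (c : CA) (P : Perturbation c) (U : ((ℤ × ℤ) × ℕ) → Ω → ℝ)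
    (τ : Ω' → Ω) (A0 : Set Pt) :
    ∀ t ω', dyn c P (fun i ω' => U i (τ ω')) A0 t ω' = dyn c P U A0 t (τ ω') := by
  intro t
  induction t with
  | zero => intro ω'; rfl
  | succ t ih => intro ω'; simp only [dyn, ih]

end DynSec

section MeasSec

variable {Ω : Type*} [MeasurableSpace Ω]

lemma measurable_mem_dyn (c : CA) (P : Perturbation c) (U : ((ℤ × ℤ) × ℕ) → Ω → ℝ)
    (hU : ∀ i, Measurable (U i)) (A0 : Set Pt) :
    ∀ (t : ℕ) (x : Pt), MeasurableSet {ω | x ∈ dyn c P U A0 t ω} := by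
  classical
  intro t
  induction t with
  | zero =>
    intro x
    by_cases hx : x ∈ A0
    · have : {ω : Ω | x ∈ dyn c P U A0 0 ω} = Set.univ := by
        ext ω; simpa [dyn] using hx
      rw [this]; exact MeasurableSet.univ
    · have : {ω : Ω | x ∈ dyn c P U A0 0 ω} = ∅ := by
        ext ω; simpa [dyn] using hx
      rw [this]; exact MeasurableSet.empty
  | succ t ih =>
    intro x
    by_cases hx : x ∈ lattice
    · obtain ⟨z0, rfl⟩ := hx
      set F := c.finite.toFinset with hF
      have hrep : {ω : Ω | toPt z0 ∈ dyn c P U A0 (t+1) ω}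
          = ⋃ s ∈ (F.powerset : Finset (Finset Pt)),
              ({ω : Ω | ∀ n ∈ F, (toPt z0 + n ∈ dyn c P U A0 t ω ↔ n ∈ s)}
               ∩ {ω : Ω | U (z0, t) ω ≤ P.pr ↑s}) := by
        ext ω
        simp only [Set.mem_setOf_eq, Set.mem_iUnion, Set.mem_inter_iff, Finset.mem_powerset,
          exists_prop]
        constructor
        · rintro ⟨z, hz, hle⟩
          have hz0 : z = z0 := toPt_injective hz
          rw [hz0] at hle
          refine ⟨F.filter (fun n => toPt z0 + n ∈ dyn c P U A0 t ω),
            Finset.filter_subset _ _, fun n hn => ?_, ?_⟩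
          · simp [Finset.mem_filter, hn]
          · have hset : ((fun a => a - toPt z0) '' dyn c P U A0 t ω) ∩ c.N
                = ↑(F.filter (fun n => toPt z0 + n ∈ dyn c P U A0 t ω)) := by
              rw [image_sub_inter_N]
              ext n
              simp [Finset.mem_filter, hF, c.finite.mem_toFinset]
            rwa [hset] at hle
        · rintro ⟨s, hs, hcfg, hle⟩
          refine ⟨z0, rfl, ?_⟩
          have hset : ((fun a => a - toPt z0) '' dyn c P U A0 t ω) ∩ c.N = ↑s := by
            rw [image_sub_inter_N]
            ext n
            simp only [Set.mem_setOf_eq, Finset.coe_sort_coe, Finset.mem_coe]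
            constructor
            · rintro ⟨hN, hmem⟩
              exact (hcfg n (by rwa [hF, c.finite.mem_toFinset])).mp hmem
            · intro hns
              have hnF : n ∈ F := hs hns
              refine ⟨by rwa [hF, c.finite.mem_toFinset] at hnF, (hcfg n hnF).mpr hns⟩
          rw [hset]
          exact hle
      rw [hrep]
      refine Finset.measurableSet_biUnion _ (fun s _ => MeasurableSet.inter ?_ ?_)
      · have : {ω : Ω | ∀ n ∈ F, (toPt z0 + n ∈ dyn c P U A0 t ω ↔ n ∈ s)}
            = ⋂ n ∈ F, {ω : Ω | toPt z0 + n ∈ dyn c P U A0 t ω ↔ n ∈ s} := by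
          ext ω; simp
        rw [this]
        refine Finset.measurableSet_biInter _ (fun n _ => ?_)
        by_cases hns : n ∈ s
        · have : {ω : Ω | toPt z0 + n ∈ dyn c P U A0 t ω ↔ n ∈ s}
              = {ω : Ω | toPt z0 + n ∈ dyn c P U A0 t ω} := by
            ext ω; simp [hns]
          rw [this]; exact ih _
        · have : {ω : Ω | toPt z0 + n ∈ dyn c P U A0 t ω ↔ n ∈ s}
              = {ω : Ω | toPt z0 + n ∈ dyn c P U A0 t ω}ᶜ := by
            ext ω; simp [hns]
          rw [this]; exact (ih _).compl
      · exact (hU (z0, t)) measurableSet_Iic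
    · have : {ω : Ω | x ∈ dyn c P U A0 (t+1) ω} = ∅ := by
        ext ω
        simp only [Set.mem_setOf_eq, Set.mem_empty_iff_false, iff_false]
        rintro ⟨z, hz, -⟩
        exact hx ⟨z, hz⟩
      rw [this]; exact MeasurableSet.empty

lemma measurableSet_speedEvent (c : CA) (P : Perturbation c) (U : ((ℤ × ℤ) × ℕ) → Ω → ℝ)
    (hU : ∀ i, Measurable (U i)) {A0 : Set Pt} (hA0 : A0 ⊆ lattice)
    (u : Pt) (wu ε : ℝ) (t : ℕ) :
    MeasurableSet {ω : Ω | SpeedEvent u wu ε t (dyn c P U A0 t ω)} := by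
  classical
  set K := shiftSet (((t : ℝ) * (wu - ε)) • u) (Hminus u) ∩ lattice ∩
      Metric.closedBall 0 ((t : ℝ) ^ 2) with hK
  set H' := shiftSet (((t : ℝ) * (wu + ε)) • u) (Hminus u) with hH
  have hrep : {ω : Ω | SpeedEvent u wu ε t (dyn c P U A0 t ω)}
      = (⋂ z : ℤ × ℤ, {ω : Ω | toPt z ∈ K → toPt z ∈ dyn c P U A0 t ω})
        ∩ (⋂ z : ℤ × ℤ, {ω : Ω | toPt z ∈ dyn c P U A0 t ω →
            toPt z ∈ Metric.closedBall (0:Pt) ((t : ℝ) ^ 2) → toPt z ∈ H'}) := by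
    ext ω
    simp only [Set.mem_setOf_eq, Set.mem_inter_iff, Set.mem_iInter, SpeedEvent]
    constructor
    · rintro ⟨h1, h2⟩
      exact ⟨fun z hz => h1 hz, fun z hz hball => h2 ⟨hz, hball⟩⟩
    · rintro ⟨h1, h2⟩
      constructor
      · intro x hxK
        obtain ⟨z, rfl⟩ := hxK.1.2
        exact h1 z hxK
      · rintro x ⟨hx1, hx2⟩
        obtain ⟨z, rfl⟩ := dyn_subset_lattice c P U hA0 t ω hx1
        exact h2 z hx1 hx2
  rw [hrep]
  refine MeasurableSet.inter ?_ ?_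
  · refine MeasurableSet.iInter (fun z => ?_)
    by_cases hz : toPt z ∈ K
    · have : {ω : Ω | toPt z ∈ K → toPt z ∈ dyn c P U A0 t ω}
          = {ω : Ω | toPt z ∈ dyn c P U A0 t ω} := by ext ω; simp [hz]
      rw [this]; exact measurable_mem_dyn c P U hU A0 t _
    · have : {ω : Ω | toPt z ∈ K → toPt z ∈ dyn c P U A0 t ω} = Set.univ := by
        ext ω; simp [hz]
      rw [this]; exact MeasurableSet.univ
  · refine MeasurableSet.iInter (fun z => ?_)
    by_cases hz : toPt z ∈ Metric.closedBall (0:Pt) ((t : ℝ) ^ 2) ∧ toPt z ∉ H'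
    · have : {ω : Ω | toPt z ∈ dyn c P U A0 t ω →
            toPt z ∈ Metric.closedBall (0:Pt) ((t : ℝ) ^ 2) → toPt z ∈ H'}
          = {ω : Ω | toPt z ∈ dyn c P U A0 t ω}ᶜ := by
        ext ω
        simp only [Set.mem_setOf_eq, Set.mem_compl_iff]
        constructor
        · intro h hmem
          exact hz.2 (h hmem hz.1)
        · intro h hmem
          exact absurd hmem h
      rw [this]; exact (measurable_mem_dyn c P U hU A0 t _).compl
    · have : {ω : Ω | toPt z ∈ dyn c P U A0 t ω →
            toPt z ∈ Metric.closedBall (0:Pt) ((t : ℝ) ^ 2) → toPt z ∈ H'} = Set.univ := by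
        push_neg at hz
        ext ω
        simp only [Set.mem_setOf_eq, Set.mem_univ, iff_true]
        intro _ hball
        exact hz hball
      rw [this]; exact MeasurableSet.univ

end MeasSec

section ProbSpace

abbrev G0 : Type := AddCircle (1 : ℝ)
abbrev Idx : Type := (ℤ × ℤ) × ℕ
abbrev Om : Type := Idx → G0

noncomputable instance : MeasureSpace Om := ⟨MeasureTheory.Measure.addHaarMeasure ⊤⟩

instance : IsProbabilityMeasure (ℙ : Measure Om) :=
  ⟨by change (Measure.addHaarMeasure ⊤ : Measure Om) univ = 1; simpa using MeasureTheory.Measure.addHaarMeasure_self (K₀ := (⊤ : TopologicalSpace.PositiveCompacts Om))⟩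

instance : (ℙ : Measure Om).IsAddHaarMeasure := Measure.isAddHaarMeasure_addHaarMeasure _

instance : IsProbabilityMeasure (volume : Measure G0) := ⟨UnitAddCircle.measure_univ⟩

def gmap : G0 → ℝ := fun ω => ((AddCircle.measurableEquivIoc 1 0 ω : Ioc (0:ℝ) (0+1)) : ℝ)

lemma measurable_gmap : Measurable gmap :=
  measurable_subtype_coe.comp (AddCircle.measurableEquivIoc 1 0).measurable

lemma gmap_coe {x : ℝ} (hx : x ∈ Ioc (0:ℝ) (0+1)) : gmap ((x : ℝ) : G0) = x := by
  simp only [gmap, AddCircle.measurableEquivIoc, MeasurableEquiv.coe_mk, AddCircle.equivIoc]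
  rw [QuotientAddGroup.equivIocMod_coe]
  exact (toIocMod_eq_self _).mpr hx

lemma map_gmap_volume : Measure.map gmap (volume : Measure G0) = volume.restrict (Icc (0:ℝ) 1) := by
  have h1 : Measure.map ((↑) : ℝ → G0) (volume.restrict (Ioc (0:ℝ) (0+1))) = volume :=
    (AddCircle.measurePreserving_mk 1 0).map_eq
  rw [← h1, Measure.map_map measurable_gmap AddCircle.measurable_mk']
  have h2 : Measure.map (gmap ∘ ((↑) : ℝ → G0)) (volume.restrict (Ioc (0:ℝ) (0+1)))
      = Measure.map id (volume.restrict (Ioc (0:ℝ) (0+1))) := by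
    apply Measure.map_congr
    filter_upwards [ae_restrict_mem measurableSet_Ioc] with x hx
    exact gmap_coe hx
  rw [h2, Measure.map_id]
  rw [show (0:ℝ)+1 = 1 by norm_num]
  exact Measure.restrict_congr_set Ioc_ae_eq_Icc

def UU (σ : Idx → Idx) : Idx → Om → ℝ := fun i ω => gmap (ω (σ i))

lemma measurePreserving_eval (j : Idx) :
    MeasurePreserving (fun ω : Om => ω j) ℙ (volume : Measure G0) := by
  have hs : Function.Surjective (fun ω : Om => ω j) := Function.surjective_eval j
  exact AddMonoidHom.measurePreserving (f := Pi.evalAddMonoidHom (fun _ : Idx => G0) j)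
    (continuous_apply j) hs (by simp)

def restrHom (σ : Idx → Idx) (S : Finset Idx) : Om →+ ((i : S) → G0) where
  toFun := fun ω i => ω (σ i)
  map_zero' := rfl
  map_add' := fun _ _ => rfl

lemma measurePreserving_restrHom (σ : Idx → Idx) (hσ : Function.Injective σ) (S : Finset Idx) :
    MeasurePreserving (restrHom σ S) ℙ (volume : Measure ((i : S) → G0)) := by
  apply AddMonoidHom.measurePreserving (f := restrHom σ S)
  · exact continuous_pi fun i => continuous_apply _
  · intro v
    classical
    refine ⟨fun j => if h : ∃ i : S, σ i = j then v h.choose else 0, ?_⟩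
    funext i
    have h : ∃ i' : S, σ i' = σ (i : Idx) := ⟨i, rfl⟩
    simp only [restrHom, AddMonoidHom.coe_mk, ZeroHom.coe_mk, h, dif_pos]
    congr 1
    exact Subtype.ext (hσ h.choose_spec)
  · simp

lemma isUniformIID_UU (σ : Idx → Idx) (hσ : Function.Injective σ) : IsUniformIID (UU σ) := by
  classical
  refine ⟨fun i => measurable_gmap.comp (measurable_pi_apply _), ?_, ?_⟩
  · rw [ProbabilityTheory.iIndepFun_iff_measure_inter_preimage_eq_mul]
    intro S sets hsets
    have key : (⋂ i ∈ S, UU σ i ⁻¹' sets i)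
        = (restrHom σ S) ⁻¹' (Set.univ.pi fun i : S => gmap ⁻¹' sets (i : Idx)) := by
      ext ω
      simp only [Set.mem_iInter, Set.mem_preimage, Set.mem_pi, Set.mem_univ, true_implies]
      constructor
      · intro h i; exact h i i.2
      · intro h i hi; exact h ⟨i, hi⟩
    have hmeas : MeasurableSet (Set.univ.pi fun i : S => gmap ⁻¹' sets (i : Idx)) := by
      apply MeasurableSet.univ_pi
      intro i
      exact measurable_gmap (hsets i i.2)
    rw [key, (measurePreserving_restrHom σ hσ S).measure_preimage hmeas.nullMeasurableSet]
    rw [MeasureTheory.volume_pi, Measure.pi_pi]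
    rw [← Finset.prod_coe_sort S (fun i => ℙ (UU σ i ⁻¹' sets i))]
    apply Finset.prod_congr rfl
    intro i _
    have h2 : UU σ (i : Idx) ⁻¹' sets (i : Idx)
        = (fun ω : Om => ω (σ (i : Idx))) ⁻¹' (gmap ⁻¹' sets (i : Idx)) := rfl
    rw [h2, (measurePreserving_eval (σ (i : Idx))).measure_preimage
      ((measurable_gmap (hsets (i : Idx) i.2)).nullMeasurableSet)]
  · intro i
    have h1 : UU σ i = gmap ∘ (fun ω : Om => ω (σ i)) := rfl
    calc Measure.map (UU σ i) ℙ
        = Measure.map gmap (Measure.map (fun ω : Om => ω (σ i)) ℙ) :=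
          (Measure.map_map measurable_gmap (measurable_pi_apply (σ i))).symm
      _ = Measure.map gmap (volume : Measure G0) := by
          rw [(measurePreserving_eval (σ i)).map_eq]
      _ = volume.restrict (Set.Icc (0:ℝ) 1) := map_gmap_volume

def sigz (z : ℤ × ℤ) : Idx → Idx := fun i => (i.1 + z, i.2)

lemma sigz_injective (z : ℤ × ℤ) : Function.Injective (sigz z) := by
  intro a b h
  simp only [sigz, Prod.mk.injEq, add_left_inj] at h
  exact Prod.ext h.1 h.2

def shiftHom (z : ℤ × ℤ) : Om →+ Om where
  toFun := fun ω i => ω (sigz z i)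
  map_zero' := rfl
  map_add' := fun _ _ => rfl

lemma measurePreserving_shiftHom (z : ℤ × ℤ) :
    MeasurePreserving (shiftHom z) ℙ (ℙ : Measure Om) := by
  apply AddMonoidHom.measurePreserving (f := shiftHom z)
  · exact continuous_pi fun i => continuous_apply _
  · intro ω
    refine ⟨fun i => ω ((i.1 - z, i.2)), ?_⟩
    funext i
    show ω _ = ω i
    congr 1
    simp [sigz]
  · rfl

lemma UU_shift (z : ℤ × ℤ) (i : Idx) (ω : Om) : UU (sigz z) i ω = UU id i (shiftHom z ω) := rfl

end ProbSpace

section Select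

lemma inner_diff_bound (x p w : Pt) : |(inner ℝ x w : ℝ) - (inner ℝ p w : ℝ)| ≤ ‖x - p‖ * ‖w‖ := by
  rw [← inner_sub_left]
  exact abs_real_inner_le_norm _ _

lemma inner_toPt (z : ℤ × ℤ) (v : Pt) :
    (inner ℝ (toPt z) v : ℝ) = (z.1 : ℝ) * v 0 + (z.2 : ℝ) * v 1 := by
  rw [Pt.inner_eq, toPt_apply0, toPt_apply1]

lemma exists_lattice_near (p : Pt) : ∃ x : Pt, x ∈ lattice ∧ ‖x - p‖ ≤ 2 := by
  refine ⟨toPt (⌊p 0⌋, ⌊p 1⌋), ⟨_, rfl⟩, ?_⟩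
  have h := norm_le_abs_add (toPt (⌊p 0⌋, ⌊p 1⌋) - p)
  have h0 : (toPt (⌊p 0⌋, ⌊p 1⌋) - p) 0 = (⌊p 0⌋ : ℝ) - p 0 := rfl
  have h1 : (toPt (⌊p 0⌋, ⌊p 1⌋) - p) 1 = (⌊p 1⌋ : ℝ) - p 1 := rfl
  rw [h0, h1] at h
  have b0 : |(⌊p 0⌋ : ℝ) - p 0| ≤ 1 := by
    have := Int.floor_le (p 0)
    have := Int.sub_one_lt_floor (p 0)
    rw [abs_le]; constructor <;> linarith
  have b1 : |(⌊p 1⌋ : ℝ) - p 1| ≤ 1 := by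
    have := Int.floor_le (p 1)
    have := Int.sub_one_lt_floor (p 1)
    rw [abs_le]; constructor <;> linarith
  linarith

lemma exists_lattice_dir {v : Pt} (hv : ‖v‖ = 1) (h : ℝ) (hh : 0 ≤ h) :
    ∃ x : Pt, x ∈ lattice ∧ h ≤ (inner ℝ x v : ℝ) ∧ (inner ℝ x v : ℝ) ≤ h + 1 ∧ ‖x‖ ≤ 2 * h + 2 := by
  have he : ∃ e : ℤ × ℤ, (1/2 : ℝ) ≤ (inner ℝ (toPt e) v : ℝ) ∧ |(e.1 : ℝ)| + |(e.2 : ℝ)| ≤ 1 := by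
    have hsum : v 0 * v 0 + v 1 * v 1 = 1 := by
      have h1 : (inner ℝ v v : ℝ) = ‖v‖ ^ 2 := real_inner_self_eq_norm_sq v
      rw [Pt.inner_eq, hv] at h1
      nlinarith
    have habs : (1/2 : ℝ) ≤ |v 0| ∨ (1/2 : ℝ) ≤ |v 1| := by
      by_contra hcon
      push_neg at hcon
      have c0 := abs_nonneg (v 0)
      have c1 := abs_nonneg (v 1)
      nlinarith [abs_mul_abs_self (v 0), abs_mul_abs_self (v 1)]
    rcases habs with hc | hc
    · rcases abs_cases (v 0) with ⟨ha, _⟩ | ⟨ha, _⟩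
      · exact ⟨(1, 0), by rw [inner_toPt]; push_cast; linarith, by norm_num⟩
      · exact ⟨(-1, 0), by rw [inner_toPt]; push_cast; linarith, by norm_num⟩
    · rcases abs_cases (v 1) with ⟨ha, _⟩ | ⟨ha, _⟩
      · exact ⟨(0, 1), by rw [inner_toPt]; push_cast; linarith, by norm_num⟩
      · exact ⟨(0, -1), by rw [inner_toPt]; push_cast; linarith, by norm_num⟩
  obtain ⟨e, hce, hnorme⟩ := he
  set cc := (inner ℝ (toPt e) v : ℝ) with hcc
  have hnorm_e : ‖toPt e‖ ≤ 1 := by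
    have := norm_le_abs_add (toPt e)
    rw [toPt_apply0, toPt_apply1] at this
    linarith
  have hcle : cc ≤ 1 := by
    have h1 : cc ≤ ‖toPt e‖ * ‖v‖ := real_inner_le_norm _ _
    rw [hv] at h1
    linarith
  have hcpos : (0:ℝ) < cc := by linarith
  set k : ℕ := ⌊h / cc⌋₊ + 1 with hk
  have hk1 : h / cc < (k : ℝ) := by
    have := Nat.lt_floor_add_one (h / cc)
    push_cast [hk]
    linarith
  have hk2 : (k : ℝ) ≤ h / cc + 1 := by
    have := Nat.floor_le (by positivity : (0:ℝ) ≤ h / cc)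
    push_cast [hk]
    linarith
  have hx : (inner ℝ (toPt ((k : ℤ) * e.1, (k : ℤ) * e.2)) v : ℝ) = (k : ℝ) * cc := by
    rw [inner_toPt, hcc, inner_toPt]
    push_cast
    ring
  refine ⟨toPt ((k : ℤ) * e.1, (k : ℤ) * e.2), ⟨_, rfl⟩, ?_, ?_, ?_⟩
  · rw [hx]
    calc h = (h / cc) * cc := by field_simp
    _ ≤ (k : ℝ) * cc := by nlinarith
  · rw [hx]
    calc (k : ℝ) * cc ≤ (h / cc + 1) * cc := by nlinarith
    _ = h + cc := by field_simp
    _ ≤ h + 1 := by linarith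
  · have hb := norm_le_abs_add (toPt ((k : ℤ) * e.1, (k : ℤ) * e.2))
    rw [toPt_apply0, toPt_apply1] at hb
    have hbb : |(((k : ℤ) * e.1 : ℤ) : ℝ)| + |(((k : ℤ) * e.2 : ℤ) : ℝ)|
        = (k : ℝ) * (|(e.1 : ℝ)| + |(e.2 : ℝ)|) := by
      push_cast
      rw [abs_mul, abs_mul, abs_of_nonneg (show (0:ℝ) ≤ (k : ℝ) by positivity)]
      ring
    rw [hbb] at hb
    have hk0 : (0:ℝ) ≤ (k : ℝ) := Nat.cast_nonneg k
    have habs0 : (0:ℝ) ≤ |(e.1 : ℝ)| + |(e.2 : ℝ)| := by positivity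
    calc ‖toPt ((k : ℤ) * e.1, (k : ℤ) * e.2)‖
        ≤ (k : ℝ) * (|(e.1 : ℝ)| + |(e.2 : ℝ)|) := hb
    _ ≤ (k : ℝ) * 1 := by nlinarith
    _ = (k : ℝ) := mul_one _
    _ ≤ 2 * h + 2 := by
        have hdiv : h / cc ≤ 2 * h := by
          rw [div_le_iff₀ hcpos]; nlinarith
        linarith

lemma events_nonempty {Ω : Type*} [MeasureSpace Ω] [IsProbabilityMeasure (ℙ : Measure Ω)]
    {E F : Set Ω} (hE : MeasurableSet E) (hF : MeasurableSet F)
    (h1 : 1/2 < ℙ E) (h2 : 1/2 < ℙ F) : (E ∩ F).Nonempty := by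
  rw [Set.nonempty_iff_ne_empty]
  intro hcon
  have hdisj : Disjoint E F := Set.disjoint_iff_inter_eq_empty.mpr hcon
  have hunion : ℙ (E ∪ F) = ℙ E + ℙ F := measure_union hdisj hF
  have hle : ℙ (E ∪ F) ≤ 1 := prob_le_one
  have hgt : (1 : ℝ≥0∞) < ℙ E + ℙ F := by
    have := ENNReal.add_lt_add h1 h2
    rwa [ENNReal.add_halves] at this
  rw [hunion] at hle
  exact absurd (lt_of_lt_of_le hgt hle) (lt_irrefl _)

end Select

section Main

set_option maxHeartbeats 2000000 in
lemma main_ineq (c : CA) (P : Perturbation c)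
    (wpi : Pt → ℝ) (hpos : ∀ u : Pt, ‖u‖ = 1 → 0 < wpi u)
    (hspeed : ∀ u : Pt, ‖u‖ = 1 →
      ∀ (Ω : Type) [MeasureSpace Ω] [IsProbabilityMeasure (ℙ : Measure Ω)]
        (U : ((ℤ × ℤ) × ℕ) → Ω → ℝ), IsUniformIID U →
        ∀ A : ℕ → Ω → Set Pt, IsDyn c P U A →
          A 0 = (fun _ => Hminus u ∩ lattice) →
        ∀ ε : ℝ, 0 < ε →
          Tendsto (fun t : ℕ => ℙ {ω | SpeedEvent u (wpi u) ε t (A t ω)})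
            atTop (nhds 1))
    (R : ℝ) (hR1 : 1 ≤ R) (hN : ∀ n ∈ c.N, ‖n‖ ≤ R)
    {u u' : Pt} (hu : ‖u‖ = 1) (hu' : ‖u'‖ = 1) :
    wpi u - wpi u' ≤ ‖u' - u‖ * (2 * wpi u + R) := by
  have ha : 0 < wpi u := hpos u hu
  have ha' : 0 < wpi u' := hpos u' hu'
  have hθ0 : 0 ≤ ‖u' - u‖ := norm_nonneg _
  have hθ2 : ‖u' - u‖ ≤ 2 := by
    calc ‖u' - u‖ ≤ ‖u'‖ + ‖u‖ := norm_sub_le _ _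
    _ = 2 := by rw [hu, hu']; norm_num
  suffices hsuf : ∀ ε : ℝ, 0 < ε → ε < wpi u →
      wpi u - wpi u' ≤ 2 * ε + ‖u' - u‖ * (2 * wpi u + R) by
    by_contra hcon
    push_neg at hcon
    set δ := wpi u - wpi u' - ‖u' - u‖ * (2 * wpi u + R) with hδ
    have hδpos : 0 < δ := by simp only [hδ]; linarith
    have hεpos : 0 < min (wpi u / 2) (δ / 4) := lt_min (by linarith) (by linarith)
    have hεlt : min (wpi u / 2) (δ / 4) < wpi u :=
      lt_of_le_of_lt (min_le_left _ _) (by linarith)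
    have h2 := hsuf _ hεpos hεlt
    have h3 : min (wpi u / 2) (δ / 4) ≤ δ / 4 := min_le_right _ _
    simp only [hδ] at h3 ⊢
    linarith
  intro ε hε hεa
  -- the two speed events for the canonical dynamics
  have hUiid : IsUniformIID (UU id) := isUniformIID_UU id Function.injective_id
  have hB := hspeed u hu Om (UU id) hUiid
    (dyn c P (UU id) (Hminus u ∩ lattice)) (isDyn_dyn c P (UU id) _) rfl ε hε
  have hA := hspeed u' hu' Om (UU id) hUiid
    (dyn c P (UU id) (Hminus u' ∩ lattice)) (isDyn_dyn c P (UU id) _) rfl ε hε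
  have hhalf : (1/2 : ℝ≥0∞) < 1 := by norm_num
  have hPB : ∀ᶠ t : ℕ in atTop,
      (1/2 : ℝ≥0∞) < ℙ {ω | SpeedEvent u (wpi u) ε t (dyn c P (UU id) (Hminus u ∩ lattice) t ω)} :=
    hB.eventually (lt_mem_nhds hhalf)
  have hPA : ∀ᶠ t : ℕ in atTop,
      (1/2 : ℝ≥0∞) < ℙ {ω | SpeedEvent u' (wpi u') ε t (dyn c P (UU id) (Hminus u' ∩ lattice) t ω)} :=
    hA.eventually (lt_mem_nhds hhalf)
  have hnat : Tendsto (fun t : ℕ => (t : ℝ)) atTop atTop := tendsto_natCast_atTop_atTop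
  have hT1 : ∀ᶠ t : ℕ in atTop, 2 / (wpi u - ε) ≤ (t : ℝ) := hnat.eventually_ge_atTop _
  have hT2 : ∀ᶠ t : ℕ in atTop, wpi u ≤ (t : ℝ) := hnat.eventually_ge_atTop _
  have hT3 : ∀ᶠ t : ℕ in atTop, (5 * wpi u + 4 * R) + 2 ≤ (t : ℝ) := hnat.eventually_ge_atTop _
  -- the key eventual inequality
  have hkey : ∀ᶠ t : ℕ in atTop,
      (t : ℝ) * ((wpi u - ε) - (wpi u' + ε) - ‖u' - u‖ * (2 * wpi u + R)) ≤ 5 := by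
    filter_upwards [hPB, hPA, hT1, hT2, hT3] with t hpB hpA ht1 ht2 ht3
    have ht0 : (0:ℝ) ≤ (t:ℝ) := Nat.cast_nonneg t
    have haε : 0 < wpi u - ε := by linarith
    have hs0 : (0:ℝ) ≤ (t : ℝ) * (wpi u - ε) - 2 := by
      have := (div_le_iff₀ haε).mp ht1
      linarith
    set s : ℝ := (t : ℝ) * (wpi u - ε) - 2 with hsdef
    obtain ⟨x, hxlat, hxnear⟩ := exists_lattice_near (s • u)
    -- inner product estimates for x
    have hinner_su : (inner ℝ (s • u) u : ℝ) = s := by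
      rw [real_inner_smul_left, real_inner_self_eq_norm_sq, hu]; ring
    have hxd : |(inner ℝ x u : ℝ) - s| ≤ 2 := by
      have h := inner_diff_bound x (s • u) u
      rw [hu, mul_one, hinner_su] at h
      exact h.trans hxnear
    obtain ⟨hxge, hxle⟩ := abs_le.mp hxd
    have hxu_le : (inner ℝ x u : ℝ) ≤ (t : ℝ) * (wpi u - ε) := by
      simp only [hsdef] at hxle ⊢; linarith
    have hxu_ge : (t : ℝ) * (wpi u - ε) - 4 ≤ (inner ℝ x u : ℝ) := by
      simp only [hsdef] at hxge ⊢; linarith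
    have hxnorm : ‖x‖ ≤ s + 2 := by
      have h1 : ‖x‖ ≤ ‖x - s • u‖ + ‖s • u‖ := by
        have := norm_add_le (x - s • u) (s • u)
        simpa using this
      have h2 : ‖s • u‖ = s := by
        rw [norm_smul, hu, mul_one, Real.norm_eq_abs, abs_of_nonneg]
        simpa [hsdef] using hs0
      linarith
    -- the shift vector
    set ρ : ℝ := R * (t : ℝ) + (t : ℝ) * wpi u with hρdef
    have hρ0 : 0 ≤ ρ := by
      have : (0:ℝ) ≤ R * t := mul_nonneg (by linarith) ht0
      have : (0:ℝ) ≤ (t:ℝ) * wpi u := mul_nonneg ht0 ha.le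
      simp only [hρdef]; linarith
    have hh0 : 0 ≤ ‖u' - u‖ * ρ := mul_nonneg hθ0 hρ0
    obtain ⟨v₀, hvlat, hv1, hv2, hv3⟩ := exists_lattice_dir hu' (‖u' - u‖ * ρ) hh0
    obtain ⟨z₀, rfl⟩ := hvlat
    -- the coupling hypothesis
    have hcoup : ∀ y ∈ Hminus u ∩ lattice, dist y x ≤ R * (t:ℝ) →
        y ∈ (fun a => a + toPt z₀) '' (Hminus u' ∩ lattice) := by
      rintro y ⟨hyH, hylat⟩ hdist
      rw [mem_image_add]
      refine ⟨?_, lattice_sub_mem hylat ⟨z₀, rfl⟩⟩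
      show (inner ℝ (y - toPt z₀) u' : ℝ) ≤ 0
      rw [inner_sub_left]
      have hyu : (inner ℝ y u : ℝ) ≤ 0 := hyH
      have hydiff : |(inner ℝ y u' : ℝ) - (inner ℝ y u : ℝ)| ≤ ‖y‖ * ‖u' - u‖ := by
        rw [← inner_sub_right]
        exact abs_real_inner_le_norm _ _
      have hynorm : ‖y‖ ≤ ρ := by
        have h1 : ‖y‖ ≤ ‖y - x‖ + ‖x‖ := by
          have := norm_add_le (y - x) x
          simpa using this
        rw [dist_eq_norm] at hdist
        have h2 : s + 2 = (t:ℝ) * (wpi u - ε) := by simp [hsdef]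
        have h3 : (t:ℝ) * (wpi u - ε) ≤ (t:ℝ) * wpi u := by nlinarith
        simp only [hρdef]
        linarith
      have h4 : (inner ℝ y u' : ℝ) ≤ ‖u' - u‖ * ρ := by
        have h5 := (abs_le.mp hydiff).2
        have h6 : ‖y‖ * ‖u' - u‖ ≤ ρ * ‖u' - u‖ := mul_le_mul_of_nonneg_right hynorm hθ0
        calc (inner ℝ y u' : ℝ) ≤ (inner ℝ y u : ℝ) + ‖y‖ * ‖u' - u‖ := by linarith
        _ ≤ ρ * ‖u' - u‖ := by linarith
        _ = ‖u' - u‖ * ρ := mul_comm _ _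
      linarith [hv1]
    -- choose a point in both events
    have hUmeas : ∀ i, Measurable (UU id i) := hUiid.1
    have mB := measurableSet_speedEvent c P (UU id) hUmeas
      (Set.inter_subset_right : Hminus u ∩ lattice ⊆ lattice) u (wpi u) ε t
    have mA := measurableSet_speedEvent c P (UU id) hUmeas
      (Set.inter_subset_right : Hminus u' ∩ lattice ⊆ lattice) u' (wpi u') ε t
    have hpre : ℙ ((shiftHom z₀) ⁻¹'
        {ω | SpeedEvent u' (wpi u') ε t (dyn c P (UU id) (Hminus u' ∩ lattice) t ω)})
        = ℙ {ω | SpeedEvent u' (wpi u') ε t (dyn c P (UU id) (Hminus u' ∩ lattice) t ω)} :=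
      (measurePreserving_shiftHom z₀).measure_preimage mA.nullMeasurableSet
    obtain ⟨ω, hωB, hωA⟩ := events_nonempty mB
      (mA.preimage (measurePreserving_shiftHom z₀).measurable) hpB (by rw [hpre]; exact hpA)
    -- x is in the lower event set
    have hxball : ‖x‖ ≤ (t:ℝ)^2 := by
      have h2 : s + 2 = (t:ℝ) * (wpi u - ε) := by simp [hsdef]
      have h3 : (t:ℝ) * (wpi u - ε) ≤ (t:ℝ) * wpi u := by nlinarith
      have h4 : (t:ℝ) * wpi u ≤ (t:ℝ) * (t:ℝ) := by nlinarith
      have h5 : (t:ℝ)^2 = (t:ℝ) * (t:ℝ) := by ring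
      linarith
    have hx1 : x ∈ dyn c P (UU id) (Hminus u ∩ lattice) t ω := by
      apply hωB.1
      refine ⟨⟨(mem_shift_Hminus hu _ x).mpr hxu_le, hxlat⟩, ?_⟩
      rw [Metric.mem_closedBall, dist_zero_right]
      exact hxball
    -- coupling step
    have hx2 : x ∈ dyn c P (UU id) ((fun a => a + toPt z₀) '' (Hminus u' ∩ lattice)) t ω :=
      dyn_coupling c P (UU id) R hN t x _ _ ω hcoup hx1
    -- translation + shift of noise
    have htrans := dyn_translate c P (UU id) z₀ (Hminus u' ∩ lattice) t ω
    have hcompeq : (fun (i : (ℤ × ℤ) × ℕ) (ω : Om) => UU id ((i.1 + z₀, i.2)) ω)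
        = (fun (i : (ℤ × ℤ) × ℕ) (ω : Om) => UU id i (shiftHom z₀ ω)) := rfl
    rw [hcompeq] at htrans
    have hcomp := dyn_comp c P (UU id) (shiftHom z₀) (Hminus u' ∩ lattice) t ω
    rw [hcomp] at htrans
    rw [htrans, mem_image_add] at hx2
    -- upper event application
    have hvnorm : ‖toPt z₀‖ ≤ 2 * (‖u' - u‖ * ρ) + 2 := hv3
    have hxz : ‖x - toPt z₀‖ ≤ (t:ℝ)^2 := by
      have h1 : ‖x - toPt z₀‖ ≤ ‖x‖ + ‖toPt z₀‖ := norm_sub_le _ _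
      have h2 : s + 2 = (t:ℝ) * (wpi u - ε) := by simp [hsdef]
      have h3 : (t:ℝ) * (wpi u - ε) ≤ (t:ℝ) * wpi u := by nlinarith
      have h4 : ‖u' - u‖ * ρ ≤ 2 * ρ := mul_le_mul_of_nonneg_right hθ2 hρ0
      have h5 : ‖x - toPt z₀‖ ≤ (t:ℝ) * (5 * wpi u + 4 * R) + 6 := by
        simp only [hρdef] at h4 ⊢
        nlinarith
      have h6 : (t:ℝ) * (5 * wpi u + 4 * R) + 6 ≤ (t:ℝ)^2 := by
        have h7 : (t:ℝ) * ((5 * wpi u + 4 * R) + 2) ≤ (t:ℝ) * (t:ℝ) := by nlinarith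
        have h8 : (1:ℝ) ≤ (t:ℝ) := by nlinarith
        have h9 : (6:ℝ) ≤ 2 * (t:ℝ) + 4 := by linarith
        nlinarith [sq_nonneg ((t:ℝ) - 1)]
      linarith
    have hup : (inner ℝ (x - toPt z₀) u' : ℝ) ≤ (t:ℝ) * (wpi u' + ε) := by
      have := hωA.2 ⟨hx2, by rw [Metric.mem_closedBall, dist_zero_right]; exact hxz⟩
      exact (mem_shift_Hminus hu' _ _).mp this
    -- final arithmetic
    rw [inner_sub_left] at hup
    have hxdiff : |(inner ℝ x u' : ℝ) - (inner ℝ x u : ℝ)| ≤ ‖x‖ * ‖u' - u‖ := by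
      rw [← inner_sub_right]
      exact abs_real_inner_le_norm _ _
    have hxd2 := (abs_le.mp hxdiff).1
    have hxn2 : ‖x‖ * ‖u' - u‖ ≤ (s + 2) * ‖u' - u‖ := mul_le_mul_of_nonneg_right hxnorm hθ0
    have h2 : s + 2 = (t:ℝ) * (wpi u - ε) := by simp [hsdef]
    have hεθ : (t:ℝ) * (wpi u - ε) * ‖u' - u‖ ≤ (t:ℝ) * wpi u * ‖u' - u‖ := by
      have : (t:ℝ) * (wpi u - ε) ≤ (t:ℝ) * wpi u := by nlinarith
      exact mul_le_mul_of_nonneg_right this hθ0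
    have hρθ : ‖u' - u‖ * ρ = ‖u' - u‖ * (R * (t:ℝ)) + ‖u' - u‖ * ((t:ℝ) * wpi u) := by
      simp only [hρdef]; ring
    nlinarith [hv2, hup, hxu_ge, hxd2, hxn2, hεθ]
  -- conclude the inequality from the eventual bound
  have hγ : (wpi u - ε) - (wpi u' + ε) - ‖u' - u‖ * (2 * wpi u + R) ≤ 0 := by
    by_contra hcon
    push_neg at hcon
    have hdiv : Tendsto (fun t : ℕ =>
        (t : ℝ) * ((wpi u - ε) - (wpi u' + ε) - ‖u' - u‖ * (2 * wpi u + R)))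
        atTop atTop := (tendsto_natCast_atTop_atTop).atTop_mul_const hcon
    obtain ⟨t, h1, h2⟩ := (hkey.and (hdiv.eventually_ge_atTop 6)).exists
    linarith
  linarith

end Main

theorem stmt11 (c : CA) (w : Pt → ℝ) (hw : IsSpeed c w) (hsc : Supercritical w)
    (hlr : LocallyRegular c) (P : Perturbation c)
    (wpi : Pt → ℝ) (hpos : ∀ u : Pt, ‖u‖ = 1 → 0 < wpi u)
    (hspeed : ∀ u : Pt, ‖u‖ = 1 →
      ∀ (Ω : Type) [MeasureSpace Ω] [IsProbabilityMeasure (ℙ : Measure Ω)]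
        (U : ((ℤ × ℤ) × ℕ) → Ω → ℝ), IsUniformIID U →
        ∀ A : ℕ → Ω → Set Pt, IsDyn c P U A →
          A 0 = (fun _ => Hminus u ∩ lattice) →
        ∀ ε : ℝ, 0 < ε →
          Tendsto (fun t : ℕ => ℙ {ω | SpeedEvent u (wpi u) ε t (A t ω)})
            atTop (nhds 1)) :
    ContinuousOn wpi (Metric.sphere (0 : Pt) 1) := by
  -- obtain a uniform bound on the neighborhood
  obtain ⟨b, hb⟩ : BddAbove ((fun n : Pt => ‖n‖) '' c.N) := (c.finite.image _).bddAbove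
  set R : ℝ := max b 1 with hRdef
  have hR1 : 1 ≤ R := le_max_right _ _
  have hN : ∀ n ∈ c.N, ‖n‖ ≤ R := by
    intro n hn
    exact le_trans (hb ⟨n, hn, rfl⟩) (le_max_left _ _)
  intro u hu
  have hu1 : ‖u‖ = 1 := by
    rw [mem_sphere_zero_iff_norm] at hu
    exact hu
  have hau : 0 < wpi u := hpos u hu1
  rw [Metric.continuousWithinAt_iff]
  intro ε hε
  set K : ℝ := 4 * wpi u + 3 * R with hKdef
  have hK0 : 0 < K := by simp only [hKdef]; linarith
  refine ⟨min (1/4) (ε / (K + 1)), lt_min (by norm_num) (by positivity), ?_⟩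
  intro u₁ hu₁ hdist
  have hu₁1 : ‖u₁‖ = 1 := by
    rw [mem_sphere_zero_iff_norm] at hu₁
    exact hu₁
  have hθ : ‖u₁ - u‖ = dist u₁ u := (dist_eq_norm _ _).symm
  have hθ0 : 0 ≤ ‖u₁ - u‖ := norm_nonneg _
  have hθ14 : ‖u₁ - u‖ < 1/4 := by
    rw [hθ]
    exact lt_of_lt_of_le hdist (min_le_left _ _)
  have hθε : ‖u₁ - u‖ < ε / (K + 1) := by
    rw [hθ]
    exact lt_of_lt_of_le hdist (min_le_right _ _)
  have M1 : wpi u - wpi u₁ ≤ ‖u₁ - u‖ * (2 * wpi u + R) :=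
    main_ineq c P wpi hpos hspeed R hR1 hN hu1 hu₁1
  have M2 : wpi u₁ - wpi u ≤ ‖u - u₁‖ * (2 * wpi u₁ + R) :=
    main_ineq c P wpi hpos hspeed R hR1 hN hu₁1 hu1
  rw [norm_sub_rev] at M2
  have hau₁ : 0 < wpi u₁ := hpos u₁ hu₁1
  have hbound : wpi u₁ ≤ 2 * wpi u + R := by nlinarith
  have habs : |wpi u₁ - wpi u| ≤ ‖u₁ - u‖ * K := by
    rw [abs_le]
    constructor
    · have : ‖u₁ - u‖ * (2 * wpi u + R) ≤ ‖u₁ - u‖ * K := by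
        apply mul_le_mul_of_nonneg_left _ hθ0
        simp only [hKdef]; linarith
      linarith
    · have h1 : 2 * wpi u₁ + R ≤ K := by simp only [hKdef]; linarith
      have : ‖u₁ - u‖ * (2 * wpi u₁ + R) ≤ ‖u₁ - u‖ * K :=
        mul_le_mul_of_nonneg_left h1 hθ0
      linarith
  rw [Real.dist_eq]
  calc |wpi u₁ - wpi u| ≤ ‖u₁ - u‖ * K := habs
  _ < (ε / (K + 1)) * K := by
      apply mul_lt_mul_of_pos_right hθε hK0
  _ < ε := by
      rw [div_mul_eq_mul_div, div_lt_iff₀ (by linarith)]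
      nlinarith


end
end

section
/- Consider the slow growth surface: heights η'_t : ℤ → ℕ with η'₀ ≡ 0 and η'_{t+1}(x) = η'_t(x) + 1 if b(x, t) = 1 and η'_t(y) ≥ η'_t(x) for all y with |y − x| ≤ 1, and η'_{t+1}(x) = η'_t(x) otherwise. Then: (1) for every p' > 0 and r ∈ ℕ there exist α > 0 and c > 0 such that for every admissible field b, every x ∈ ℤ and every t, P(η'_t(x) ≤ αt) ≤ e^{−ct}; (2) for every ε > 0 and r ∈ ℕ there exist p'₀ < 1 and c > 0 such that whenever p' ≥ p'₀, for every admissible field b, every x and t, P(η'_t(x) ≤ (1 − ε)t) ≤ e^{−ct}. -/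
open MeasureTheory ProbabilityTheory Filter Topology Set
open scoped Pointwise ENNReal

noncomputable section

def disp : Fin 4 → ℤ := ![0, 0, 1, -1]

def epos (gg : ℕ → Fin 4) (x : ℤ) (t s : ℕ) : ℤ := x - ∑ u ∈ Finset.Ico s t, disp (gg u)

lemma cert_step {Ω : Type*} (b : ℤ × ℕ → Ω → Bool) (ω : Ω) (t : ℕ) (x y : ℤ)
    (gg' : ℕ → Fin 4) (v : Fin 4) (hy : x - disp v = y)
    (h1 : ∀ s, s < t → gg' s = 0 → b (epos gg' y t s, s) ω = false)
    (hv : v = 0 → b (x, t) ω = false) :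
    (∀ s, s < t + 1 → (fun u => if u = t then v else gg' u) s = 0 →
      b (epos (fun u => if u = t then v else gg' u) x (t+1) s, s) ω = false) ∧
    ((Finset.range (t+1)).filter
        (fun s => (fun u => if u = t then v else gg' u) s ≠ 0)).card
      = ((Finset.range t).filter (fun s => gg' s ≠ 0)).card
        + (if v = 0 then 0 else 1) := by
  set gg := fun u => if u = t then v else gg' u with hgg
  have hepos : ∀ s, s ≤ t → epos gg x (t+1) s = epos gg' y t s := by
    intro s hs
    unfold epos
    rw [Finset.sum_Ico_succ_top hs]
    have he : ∑ u ∈ Finset.Ico s t, disp (gg u) = ∑ u ∈ Finset.Ico s t, disp (gg' u) := by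
      apply Finset.sum_congr rfl
      intro u hu
      have hut : u ≠ t := Nat.ne_of_lt (Finset.mem_Ico.mp hu).2
      simp [hgg, hut]
    have hgt : gg t = v := by simp [hgg]
    rw [he, hgt]
    omega
  constructor
  · intro s hs hs0
    rcases Nat.lt_succ_iff_lt_or_eq.mp hs with hslt | rfl
    · have hst : s ≠ t := Nat.ne_of_lt hslt
      have hs0' : gg' s = 0 := by simpa [hgg, hst] using hs0
      rw [hepos s (le_of_lt hslt)]
      exact h1 s hslt hs0'
    · have hv0 : v = 0 := by simpa [hgg] using hs0
      have : epos gg x (s+1) s = x := by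
        unfold epos
        simp [hgg, hv0, disp]
      rw [this]
      exact hv hv0
  · rw [Finset.range_add_one, Finset.filter_insert]
    have hfc : (Finset.range t).filter (fun s => gg s ≠ 0)
        = (Finset.range t).filter (fun s => gg' s ≠ 0) := by
      apply Finset.filter_congr
      intro u hu
      have hut : u ≠ t := Nat.ne_of_lt (Finset.mem_range.mp hu)
      simp [hgg, hut]
    have hggt : gg t = v := by simp [hgg]
    by_cases hv0 : v = 0
    · rw [if_neg (by simp [hggt, hv0]), hfc, if_pos hv0, Nat.add_zero]
    · rw [if_pos (by simp [hggt, hv0]), if_neg hv0,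
        Finset.card_insert_of_notMem (by simp), hfc]

lemma exists_cert {Ω : Type*} (b : ℤ × ℕ → Ω → Bool) (η : ℕ → Ω → ℤ → ℕ)
    (hη : IsSlowSurface b η) (ω : Ω) :
    ∀ t : ℕ, ∀ x : ℤ, ∃ gg : ℕ → Fin 4,
      (∀ s, s < t → gg s = 0 → b (epos gg x t s, s) ω = false) ∧
      ((Finset.range t).filter (fun s => gg s ≠ 0)).card ≤ η t ω x := by
  intro t
  induction t with
  | zero =>
    intro x
    exact ⟨fun _ => 0, fun s hs => absurd hs (Nat.not_lt_zero s), by simp⟩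
  | succ t ih =>
    intro x
    have hrec := hη.2 ω t x
    by_cases hg : b (x, t) ω = true ∧ ∀ y : ℤ, |y - x| ≤ 1 → η t ω x ≤ η t ω y
    · -- growth case: stay at x, value 1
      obtain ⟨gg', h1, h2⟩ := ih x
      have hstep := cert_step b ω t x x gg' 1 (by simp [disp]) h1 (by simp)
      refine ⟨_, hstep.1, ?_⟩
      rw [hstep.2, hrec, if_pos hg]
      simpa using Nat.add_le_add_right h2 1
    · rw [hrec, if_neg hg] at *
      push_neg at hg
      by_cases hb : b (x, t) ω = true
      · -- move case
        obtain ⟨y, hy1, hy2⟩ := hg hb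
        obtain ⟨gg', h1, h2⟩ := ih y
        have hyx : x - y = 1 ∨ x - y = -1 := by
          have h1' := abs_le.mp hy1
          have : y ≠ x := by intro h; rw [h] at hy2; omega
          omega
        have hv : ∃ v : Fin 4, v ≠ 0 ∧ x - disp v = y := by
          rcases hyx with h | h
          · exact ⟨2, by decide, by simp [disp]; omega⟩
          · exact ⟨3, by decide, by simp [disp]; omega⟩
        obtain ⟨v, hv0, hvy⟩ := hv
        have hstep := cert_step b ω t x y gg' v hvy h1 (fun h => absurd h hv0)
        refine ⟨_, hstep.1, ?_⟩
        rw [hstep.2, if_neg hv0]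
        omega
      · -- failure case: stay at x, value 0
        obtain ⟨gg', h1, h2⟩ := ih x
        have hbf : b (x, t) ω = false := by
          cases h : b (x, t) ω
          · rfl
          · exact absurd h hb
        have hstep := cert_step b ω t x x gg' 0 (by simp [disp]) h1 (fun _ => hbf)
        refine ⟨_, hstep.1, ?_⟩
        rw [hstep.2, if_pos rfl]
        omega


def gext {t : ℕ} (g : Fin t → Fin 4) : ℕ → Fin 4 := fun u => if h : u < t then g ⟨u, h⟩ else 0

def kcard {t : ℕ} (g : Fin t → Fin 4) : ℕ := (Finset.univ.filter (fun s => g s ≠ 0)).card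

def Ecert {Ω : Type*} (b : ℤ × ℕ → Ω → Bool) (x : ℤ) {t : ℕ} (g : Fin t → Fin 4) : Set Ω :=
  {ω | ∀ s : Fin t, g s = 0 → b (epos (gext g) x t s, s) ω = false}

lemma prob_false {Ω : Type} [MeasureSpace Ω] [IsProbabilityMeasure (ℙ : Measure Ω)]
    {p' : ℝ} (hp0 : 0 ≤ p') {r : ℕ} {b : ℤ × ℕ → Ω → Bool} (hb : AdmissibleField p' r b) (i : ℤ × ℕ) :
    ℙ ((b i) ⁻¹' {false}) = ENNReal.ofReal (1 - p') := by
  have h1 : (b i) ⁻¹' {false} = ((b i) ⁻¹' {true})ᶜ := by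
    ext ω; simp [Set.mem_preimage]
  have hm : MeasurableSet ((b i) ⁻¹' {true}) := (hb.1 i) (by trivial)
  rw [h1, prob_compl_eq_one_sub hm]
  have h2 : ((b i) ⁻¹' {true}) = {ω | b i ω = true} := rfl
  rw [h2, hb.2.1 i, ← ENNReal.ofReal_one, ← ENNReal.ofReal_sub _ hp0]

lemma prob_Ecert {Ω : Type} [MeasureSpace Ω] [IsProbabilityMeasure (ℙ : Measure Ω)]
    {p' : ℝ} (hp0 : 0 < p') {r : ℕ} {b : ℤ × ℕ → Ω → Bool} (hb : AdmissibleField p' r b)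
    (x : ℤ) {t : ℕ} (g : Fin t → Fin 4) :
    ℙ (Ecert b x g) ≤ (ENNReal.ofReal (1 - p')) ^ (t - kcard g) := by
  classical
  set F : Finset (Fin t) := Finset.univ.filter (fun s => g s = 0) with hF
  set φ : Fin t → ℤ × ℕ := fun s => (epos (gext g) x t s, (s : ℕ)) with hφ
  have hinj : Set.InjOn φ F := by
    intro a _ b' _ hab
    have : (a : ℕ) = (b' : ℕ) := congrArg Prod.snd hab
    exact Fin.ext this
  set I : Finset (ℤ × ℕ) := F.image φ with hI
  have hpair : ∀ i ∈ I, ∀ j ∈ I, i ≠ j → i.2 ≠ j.2 ∨ ((r:ℤ) < |i.1 - j.1|) := by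
    intro i hi j hj hij
    left
    obtain ⟨a, ha, rfl⟩ := Finset.mem_image.mp hi
    obtain ⟨a', ha', rfl⟩ := Finset.mem_image.mp hj
    intro hsnd
    exact hij (congrArg φ (Fin.ext hsnd))
  have hind := hb.2.2 I hpair
  have hmeas : ∀ i : I, MeasurableSet[MeasurableSpace.comap (b i.1) inferInstance]
      ((b i.1) ⁻¹' {false}) :=
    fun i => ⟨{false}, trivial, rfl⟩
  have hprod := hind.meas_biInter (S := Finset.univ)
      (s := fun i : I => (b i.1) ⁻¹' {false}) (fun i _ => hmeas i)
  have hsub : Ecert b x g ⊆ ⋂ i ∈ (Finset.univ : Finset I), (b i.1) ⁻¹' {false} := by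
    intro ω hω
    simp only [Set.mem_iInter]
    intro i _
    obtain ⟨a, ha, hai⟩ := Finset.mem_image.mp i.2
    have hg0 : g a = 0 := (Finset.mem_filter.mp ha).2
    have := hω a hg0
    rw [← hai]
    exact this
  have hFc : F.card + kcard g = t := by
    have := Finset.card_filter_add_card_filter_not
      (s := (Finset.univ : Finset (Fin t))) (p := fun s => g s = 0)
    simp only [Finset.card_univ, Fintype.card_fin] at this
    unfold kcard
    simp only [ne_eq, hF]
    exact this
  have hcard : I.card = t - kcard g := by
    rw [hI, Finset.card_image_of_injOn hinj]
    omega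
  calc ℙ (Ecert b x g) ≤ ℙ (⋂ i ∈ (Finset.univ : Finset I), (b i.1) ⁻¹' {false}) :=
        measure_mono hsub
    _ = ∏ i ∈ (Finset.univ : Finset I), ℙ ((b i.1) ⁻¹' {false}) := hprod
    _ = (ENNReal.ofReal (1 - p')) ^ (t - kcard g) := by
        rw [Finset.prod_congr rfl (fun i _ => prob_false (le_of_lt hp0) hb _)]
        rw [Finset.prod_const, Finset.card_univ, Fintype.card_coe, hcard]

lemma card_filter_fin (t : ℕ) (P : ℕ → Prop) [DecidablePred P] :
    (Finset.univ.filter (fun s : Fin t => P s.val)).card = ((Finset.range t).filter P).card := by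
  rw [Finset.card_filter, Finset.card_filter]
  exact Fin.sum_univ_eq_sum_range (fun n => if P n then 1 else 0) t

lemma master {Ω : Type} [MeasureSpace Ω] [IsProbabilityMeasure (ℙ : Measure Ω)]
    {p' : ℝ} (hp0 : 0 < p') (hp1 : p' ≤ 1) {r : ℕ} {b : ℤ × ℕ → Ω → Bool}
    (hb : AdmissibleField p' r b) {η : ℕ → Ω → ℤ → ℕ} (hη : IsSlowSurface b η)
    (x : ℤ) (t m : ℕ) {θ : ℝ} (hθ : 1 ≤ θ) :
    ℙ {ω | η t ω x ≤ m} ≤ (ENNReal.ofReal θ) ^ m *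
      (ENNReal.ofReal (1 - p') + 3 * (ENNReal.ofReal θ)⁻¹) ^ t := by
  classical
  set qE := ENNReal.ofReal (1 - p') with hqE
  set θE := ENNReal.ofReal θ with hθEdef
  have hθE1 : 1 ≤ θE := by
    rw [hθEdef, ← ENNReal.ofReal_one]
    exact ENNReal.ofReal_le_ofReal hθ
  have hθE0 : θE ≠ 0 := by
    intro h; rw [h] at hθE1; exact absurd hθE1 (by simp)
  have hθEtop : θE ≠ ⊤ := ENNReal.ofReal_ne_top
  set w : Fin 4 → ℝ≥0∞ := fun j => if j = 0 then qE else θE⁻¹ with hw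
  set S : Finset (Fin t → Fin 4) := Finset.univ.filter (fun g => kcard g ≤ m) with hS
  -- inclusion
  have hsub : {ω | η t ω x ≤ m} ⊆ ⋃ g ∈ S, Ecert b x g := by
    intro ω hω
    obtain ⟨gg, hg1, hg2⟩ := exists_cert b η hη ω t x
    set g : Fin t → Fin 4 := fun s => gg s.val with hg
    have hgS : g ∈ S := by
      rw [hS, Finset.mem_filter]
      refine ⟨Finset.mem_univ _, ?_⟩
      unfold kcard
      rw [hg]
      rw [card_filter_fin t (fun n => gg n ≠ 0)]
      exact le_trans hg2 hω
    refine Set.mem_biUnion hgS ?_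
    intro s hs0
    have hpos : epos (gext g) x t s.val = epos gg x t s.val := by
      unfold epos
      congr 1
      apply Finset.sum_congr rfl
      intro u hu
      have hut : u < t := (Finset.mem_Ico.mp hu).2
      simp [gext, hut, hg]
    rw [hpos]
    exact hg1 s.val s.isLt hs0
  -- per-certificate bound
  have hper : ∀ g ∈ S, ℙ (Ecert b x g) ≤ θE ^ m * ∏ s : Fin t, w (g s) := by
    intro g hgS
    have hk : kcard g ≤ m := (Finset.mem_filter.mp hgS).2
    have hFc : (Finset.univ.filter (fun s : Fin t => g s = 0)).card + kcard g = t := by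
      have := Finset.card_filter_add_card_filter_not
        (s := (Finset.univ : Finset (Fin t))) (p := fun s => g s = 0)
      simp only [Finset.card_univ, Fintype.card_fin] at this
      unfold kcard
      simp only [ne_eq]
      exact this
    have hprodw : ∏ s : Fin t, w (g s) = qE ^ (t - kcard g) * θE⁻¹ ^ (kcard g) := by
      rw [← Finset.prod_filter_mul_prod_filter_not Finset.univ (fun s => g s = 0)]
      have e1 : ∏ s ∈ Finset.univ.filter (fun s : Fin t => g s = 0), w (g s)
          = qE ^ (t - kcard g) := by
        have hc : ∀ s ∈ Finset.univ.filter (fun s : Fin t => g s = 0), w (g s) = qE :=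
          fun s hs => by simp [hw, (Finset.mem_filter.mp hs).2]
        rw [Finset.prod_congr rfl hc, Finset.prod_const]
        congr 1
        omega
      have e2 : ∏ s ∈ Finset.univ.filter (fun s : Fin t => ¬ g s = 0), w (g s)
          = θE⁻¹ ^ (kcard g) := by
        have hc : ∀ s ∈ Finset.univ.filter (fun s : Fin t => ¬ g s = 0), w (g s) = θE⁻¹ :=
          fun s hs => by simp [hw, (Finset.mem_filter.mp hs).2]
        rw [Finset.prod_congr rfl hc, Finset.prod_const]
        congr 1
      rw [e1, e2]
    have hone : (1 : ℝ≥0∞) ≤ θE ^ (m - kcard g) := Left.one_le_pow_of_le hθE1 _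
    calc ℙ (Ecert b x g) ≤ qE ^ (t - kcard g) := prob_Ecert hp0 hb x g
      _ = 1 * qE ^ (t - kcard g) := (one_mul _).symm
      _ ≤ θE ^ (m - kcard g) * qE ^ (t - kcard g) := by gcongr
      _ = θE ^ m * (qE ^ (t - kcard g) * θE⁻¹ ^ (kcard g)) := by
          have hcan : θE ^ kcard g * θE⁻¹ ^ kcard g = 1 := by
            rw [← mul_pow, ENNReal.mul_inv_cancel hθE0 hθEtop, one_pow]
          calc θE ^ (m - kcard g) * qE ^ (t - kcard g)
              = θE ^ (m - kcard g) * (θE ^ kcard g * θE⁻¹ ^ kcard g) * qE ^ (t - kcard g) := by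
                rw [hcan, mul_one]
            _ = θE ^ (m - kcard g) * θE ^ kcard g * (qE ^ (t - kcard g) * θE⁻¹ ^ kcard g) := by
                ring
            _ = θE ^ m * (qE ^ (t - kcard g) * θE⁻¹ ^ kcard g) := by
                rw [pow_sub_mul_pow θE hk]
      _ = θE ^ m * ∏ s : Fin t, w (g s) := by rw [hprodw]
  -- combine
  have hsum : ∑ g : Fin t → Fin 4, ∏ s : Fin t, w (g s) = (∑ j : Fin 4, w j) ^ t := by
    rw [← Fintype.piFinset_univ, ← Finset.prod_univ_sum]
    rw [Finset.prod_const, Finset.card_univ, Fintype.card_fin]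
  have hwsum : ∑ j : Fin 4, w j = qE + 3 * θE⁻¹ := by
    rw [Fin.sum_univ_four]
    simp [hw, show (1 : Fin 4) ≠ 0 by decide, show (2 : Fin 4) ≠ 0 by decide,
      show (3 : Fin 4) ≠ 0 by decide]
    ring
  calc ℙ {ω | η t ω x ≤ m}
      ≤ ∑ g ∈ S, ℙ (Ecert b x g) :=
        le_trans (measure_mono hsub) (measure_biUnion_finset_le S _)
    _ ≤ ∑ g ∈ S, θE ^ m * ∏ s : Fin t, w (g s) := Finset.sum_le_sum hper
    _ ≤ ∑ g : Fin t → Fin 4, θE ^ m * ∏ s : Fin t, w (g s) :=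
        Finset.sum_le_sum_of_subset (Finset.filter_subset _ _)
    _ = θE ^ m * ∑ g : Fin t → Fin 4, ∏ s : Fin t, w (g s) := by rw [Finset.mul_sum]
    _ = θE ^ m * (qE + 3 * θE⁻¹) ^ t := by rw [hsum, hwsum]

lemma master_real {Ω : Type} [MeasureSpace Ω] [IsProbabilityMeasure (ℙ : Measure Ω)]
    {p' : ℝ} (hp0 : 0 < p') (hp1 : p' ≤ 1) {r : ℕ} {b : ℤ × ℕ → Ω → Bool}
    (hb : AdmissibleField p' r b) {η : ℕ → Ω → ℤ → ℕ} (hη : IsSlowSurface b η)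
    (x : ℤ) (t : ℕ) {θ α cc : ℝ} (hθ : 1 ≤ θ) (hα : 0 ≤ α)
    (hbound : Real.exp (Real.log θ * α) * ((1 - p') + 3 * θ⁻¹) ≤ Real.exp (-cc)) :
    ℙ {ω | (η t ω x : ℝ) ≤ α * t} ≤ ENNReal.ofReal (Real.exp (-cc * t)) := by
  have hθpos : 0 < θ := lt_of_lt_of_le one_pos hθ
  have hq0 : 0 ≤ 1 - p' := by linarith
  have hαt : 0 ≤ α * t := by positivity
  set m := ⌊α * (t : ℝ)⌋₊ with hm
  have hev : {ω | (η t ω x : ℝ) ≤ α * t} = {ω | η t ω x ≤ m} := by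
    ext ω
    simp only [Set.mem_setOf_eq, hm]
    exact (Nat.le_floor_iff hαt).symm
  rw [hev]
  refine le_trans (master hp0 hp1 hb hη x t m hθ) ?_
  -- convert ENNReal bound to ofReal of real product
  have hconv : (ENNReal.ofReal θ) ^ m * (ENNReal.ofReal (1 - p') + 3 * (ENNReal.ofReal θ)⁻¹) ^ t
      = ENNReal.ofReal (θ ^ m * ((1 - p') + 3 * θ⁻¹) ^ t) := by
    rw [← ENNReal.ofReal_inv_of_pos hθpos]
    have h3 : (3 : ℝ≥0∞) * ENNReal.ofReal θ⁻¹ = ENNReal.ofReal (3 * θ⁻¹) := by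
      rw [ENNReal.ofReal_mul (by norm_num : (0:ℝ) ≤ 3)]
      norm_num
    rw [h3, ← ENNReal.ofReal_add hq0 (by positivity),
      ← ENNReal.ofReal_pow (le_of_lt hθpos),
      ← ENNReal.ofReal_pow (show (0:ℝ) ≤ (1 - p') + 3 * θ⁻¹ by positivity),
      ← ENNReal.ofReal_mul (by positivity)]
  rw [hconv]
  apply ENNReal.ofReal_le_ofReal
  have h1 : θ ^ m ≤ Real.exp (Real.log θ * α) ^ t := by
    have e1 : θ ^ m = Real.exp (Real.log θ * m) := by
      rw [mul_comm, Real.exp_nat_mul, Real.exp_log hθpos]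
    have e2 : Real.exp (Real.log θ * α) ^ t = Real.exp (Real.log θ * (α * t)) := by
      rw [← Real.exp_nat_mul]
      ring_nf
    rw [e1, e2]
    apply Real.exp_le_exp.mpr
    have hlog : 0 ≤ Real.log θ := Real.log_nonneg hθ
    have hmle : (m : ℝ) ≤ α * t := Nat.floor_le hαt
    calc Real.log θ * m ≤ Real.log θ * (α * t) := by
          exact mul_le_mul_of_nonneg_left hmle hlog
      _ = Real.log θ * (α * t) := rfl
  calc θ ^ m * ((1 - p') + 3 * θ⁻¹) ^ t
      ≤ Real.exp (Real.log θ * α) ^ t * ((1 - p') + 3 * θ⁻¹) ^ t := by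
        apply mul_le_mul_of_nonneg_right h1 (by positivity)
    _ = (Real.exp (Real.log θ * α) * ((1 - p') + 3 * θ⁻¹)) ^ t := (mul_pow _ _ t).symm
    _ ≤ Real.exp (-cc) ^ t := pow_le_pow_left₀ (by positivity) hbound t
    _ = Real.exp (-cc * t) := by rw [mul_comm, Real.exp_nat_mul]

lemma part1 (r : ℕ) (p' : ℝ) (hp0 : 0 < p') (hp1 : p' ≤ 1) :
    ∃ α : ℝ, 0 < α ∧ ∃ cc : ℝ, 0 < cc ∧
      ∀ (Ω : Type) [MeasureSpace Ω] [IsProbabilityMeasure (ℙ : Measure Ω)]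
        (b : ℤ × ℕ → Ω → Bool), AdmissibleField p' r b →
        ∀ η : ℕ → Ω → ℤ → ℕ, IsSlowSurface b η →
        ∀ x : ℤ, ∀ t : ℕ,
          ℙ {ω | (η t ω x : ℝ) ≤ α * t} ≤ ENNReal.ofReal (Real.exp (-cc * t)) := by
  have hp'ne : p' ≠ 0 := ne_of_gt hp0
  set θ : ℝ := 6 / p' with hθdef
  have hθ6 : (6:ℝ) ≤ θ := by
    rw [hθdef, le_div_iff₀ hp0]
    linarith
  have hθ : 1 ≤ θ := by linarith
  have hhalf : 0 < 1 - p' / 2 := by linarith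
  have hhalf1 : 1 - p' / 2 < 1 := by linarith
  have hlogneg : Real.log (1 - p' / 2) < 0 := Real.log_neg hhalf hhalf1
  set cc : ℝ := -Real.log (1 - p' / 2) / 2 with hccdef
  have hcc : 0 < cc := by rw [hccdef]; linarith
  have hlogθ : 0 < Real.log θ := Real.log_pos (by linarith)
  set α : ℝ := cc / Real.log θ with hαdef
  have hα : 0 < α := div_pos hcc hlogθ
  refine ⟨α, hα, cc, hcc, ?_⟩
  intro Ω _ _ b hb η hη x t
  apply master_real hp0 hp1 hb hη x t hθ (le_of_lt hα)
  have hsum : (1 - p') + 3 * θ⁻¹ = 1 - p' / 2 := by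
    rw [hθdef]
    field_simp
    ring
  have hexpα : Real.log θ * α = cc := by
    rw [hαdef]
    field_simp
  rw [hsum, hexpα]
  have h2 : 1 - p' / 2 = Real.exp (-(2 * cc)) := by
    have he : -(2 * cc) = Real.log (1 - p' / 2) := by rw [hccdef]; ring
    rw [he, Real.exp_log hhalf]
  rw [h2, ← Real.exp_add]
  apply le_of_eq
  congr 1
  ring

lemma part2aux (r : ℕ) (ε : ℝ) (hε : 0 < ε) (hε2 : ε ≤ 1/2) :
    ∃ p'₀ : ℝ, p'₀ < 1 ∧ ∃ cc : ℝ, 0 < cc ∧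
      ∀ p' : ℝ, p'₀ ≤ p' → p' ≤ 1 →
      ∀ (Ω : Type) [MeasureSpace Ω] [IsProbabilityMeasure (ℙ : Measure Ω)]
        (b : ℤ × ℕ → Ω → Bool), AdmissibleField p' r b →
        ∀ η : ℕ → Ω → ℤ → ℕ, IsSlowSurface b η →
        ∀ x : ℤ, ∀ t : ℕ,
          ℙ {ω | (η t ω x : ℝ) ≤ (1 - ε) * t} ≤ ENNReal.ofReal (Real.exp (-cc * t)) := by
  have hεne : ε ≠ 0 := ne_of_gt hε
  set θ : ℝ := (6:ℝ) ^ ((1:ℝ)/ε) with hθdef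
  have hθ1 : 1 ≤ θ := Real.one_le_rpow (by norm_num) (by positivity)
  have hθpos : 0 < θ := lt_of_lt_of_le one_pos hθ1
  set A : ℝ := θ ^ ((1:ℝ) - ε) with hAdef
  have hA1 : 1 ≤ A := Real.one_le_rpow hθ1 (by linarith)
  have hApos : 0 < A := lt_of_lt_of_le one_pos hA1
  set q₀ : ℝ := A⁻¹ / 4 with hq₀def
  have hq₀pos : 0 < q₀ := by positivity
  have hq₀le : q₀ ≤ 1/4 := by
    rw [hq₀def]
    have : A⁻¹ ≤ 1 := inv_le_one_of_one_le₀ hA1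
    linarith
  set cc : ℝ := -Real.log (3/4) with hccdef
  have hcc : 0 < cc := by
    rw [hccdef]
    have := Real.log_neg (by norm_num : (0:ℝ) < 3/4) (by norm_num : (3:ℝ)/4 < 1)
    linarith
  have hexpcc : Real.exp (-cc) = 3/4 := by
    rw [hccdef, neg_neg, Real.exp_log (by norm_num : (0:ℝ) < 3/4)]
  refine ⟨1 - q₀, by linarith, cc, hcc, ?_⟩
  intro p' hp'lo hp'hi Ω _ _ b hb η hη x t
  have hp0 : 0 < p' := by linarith
  apply master_real hp0 hp'hi hb hη x t hθ1 (by linarith : (0:ℝ) ≤ 1 - ε)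
  have hAexp : Real.exp (Real.log θ * (1 - ε)) = A := (Real.rpow_def_of_pos hθpos _).symm
  rw [hAexp, hexpcc]
  have hAθinv : A * θ⁻¹ = 6⁻¹ := by
    rw [hAdef, ← Real.rpow_neg_one θ, ← Real.rpow_add hθpos]
    have h1 : (1:ℝ) - ε + (-1) = -ε := by ring
    rw [h1, hθdef, ← Real.rpow_mul (by norm_num : (0:ℝ) ≤ 6)]
    have h2 : (1:ℝ)/ε * (-ε) = -1 := by field_simp
    rw [h2, Real.rpow_neg_one]
  have hq : 1 - p' ≤ q₀ := by linarith
  have hAq : A * (1 - p') ≤ 1/4 := by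
    have h1 : A * (1 - p') ≤ A * q₀ := by
      apply mul_le_mul_of_nonneg_left hq (le_of_lt hApos)
    have h2 : A * q₀ = 1/4 := by
      rw [hq₀def]
      field_simp
    linarith
  calc A * ((1 - p') + 3 * θ⁻¹) = A * (1 - p') + 3 * (A * θ⁻¹) := by ring
    _ ≤ 1/4 + 3 * 6⁻¹ := by rw [hAθinv]; linarith
    _ = 3/4 := by norm_num

lemma part2 (r : ℕ) (ε : ℝ) (hε : 0 < ε) :
    ∃ p'₀ : ℝ, p'₀ < 1 ∧ ∃ cc : ℝ, 0 < cc ∧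
      ∀ p' : ℝ, p'₀ ≤ p' → p' ≤ 1 →
      ∀ (Ω : Type) [MeasureSpace Ω] [IsProbabilityMeasure (ℙ : Measure Ω)]
        (b : ℤ × ℕ → Ω → Bool), AdmissibleField p' r b →
        ∀ η : ℕ → Ω → ℤ → ℕ, IsSlowSurface b η →
        ∀ x : ℤ, ∀ t : ℕ,
          ℙ {ω | (η t ω x : ℝ) ≤ (1 - ε) * t} ≤ ENNReal.ofReal (Real.exp (-cc * t)) := by
  set ε' : ℝ := min ε (1/2) with hε'def
  have hε'pos : 0 < ε' := lt_min hε (by norm_num)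
  have hε'le : ε' ≤ 1/2 := min_le_right _ _
  obtain ⟨p'₀, hp'₀, cc, hcc, h⟩ := part2aux r ε' hε'pos hε'le
  refine ⟨p'₀, hp'₀, cc, hcc, ?_⟩
  intro p' hp'lo hp'hi Ω _ _ b hb η hη x t
  have hsub : {ω | (η t ω x : ℝ) ≤ (1 - ε) * t} ⊆ {ω | (η t ω x : ℝ) ≤ (1 - ε') * t} := by
    intro ω hω
    simp only [Set.mem_setOf_eq] at hω ⊢
    have hεε' : ε' ≤ ε := min_le_left _ _
    have := mul_le_mul_of_nonneg_right (by linarith : (1:ℝ) - ε ≤ 1 - ε') (Nat.cast_nonneg t)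
    linarith
  exact le_trans (measure_mono hsub) (h p' hp'lo hp'hi Ω b hb η hη x t)

theorem stmt14 (r : ℕ) :
    (∀ p' : ℝ, 0 < p' → p' ≤ 1 → ∃ α : ℝ, 0 < α ∧ ∃ cc : ℝ, 0 < cc ∧
      ∀ (Ω : Type) [MeasureSpace Ω] [IsProbabilityMeasure (ℙ : Measure Ω)]
        (b : ℤ × ℕ → Ω → Bool), AdmissibleField p' r b →
        ∀ η : ℕ → Ω → ℤ → ℕ, IsSlowSurface b η →
        ∀ x : ℤ, ∀ t : ℕ,
          ℙ {ω | (η t ω x : ℝ) ≤ α * t} ≤ ENNReal.ofReal (Real.exp (-cc * t))) ∧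
    (∀ ε : ℝ, 0 < ε → ∃ p'₀ : ℝ, p'₀ < 1 ∧ ∃ cc : ℝ, 0 < cc ∧
      ∀ p' : ℝ, p'₀ ≤ p' → p' ≤ 1 →
      ∀ (Ω : Type) [MeasureSpace Ω] [IsProbabilityMeasure (ℙ : Measure Ω)]
        (b : ℤ × ℕ → Ω → Bool), AdmissibleField p' r b →
        ∀ η : ℕ → Ω → ℤ → ℕ, IsSlowSurface b η →
        ∀ x : ℤ, ∀ t : ℕ,
          ℙ {ω | (η t ω x : ℝ) ≤ (1 - ε) * t} ≤ ENNReal.ofReal (Real.exp (-cc * t))) :=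
  ⟨fun p' h0 h1 => part1 r p' h0 h1, fun ε hε => part2 r ε hε⟩

end
end
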